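/- arXiv:2310.10839 — 2 statements merged into one kernel-verified Lean document; each statement's English description precedes it below -/
import Mathlib

section
/- Let p ∈ ℝ² with ‖p‖ > r > 0 and let v ∈ ℝ² be nonzero with h(p,v) := ⟨p, v⟩ + ‖v‖·√(‖p‖² − r²) > 0. Then the ray t ↦ p + t·v, t ≥ 0, never enters the open disk of radius r centered at the origin; that is, ‖p + t v‖ ≥ r for all t ≥ 0. -/
open scoped RealInnerProductSpace

/-- If the relative velocity lies outside the collision cone (h > 0), the ray
never enters the open disk of radius r. -/
theorem stmt_1 (p v : EuclideanSpace ℝ (Fin 2)) (r : ℝ) (hr : 0 < r)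
    (hpr : r < ‖p‖) (hv : v ≠ 0)
    (hcone : ⟪p, v⟫ + ‖v‖ * Real.sqrt (‖p‖ ^ 2 - r ^ 2) > 0) :
    ∀ t : ℝ, 0 ≤ t → r ≤ ‖p + t • v‖ := by
  intro t ht
  have hp2 : (0:ℝ) < ‖p‖ ^ 2 - r ^ 2 := by nlinarith
  have hs : Real.sqrt (‖p‖ ^ 2 - r ^ 2) ^ 2 = ‖p‖ ^ 2 - r ^ 2 :=
    Real.sq_sqrt hp2.le
  have hsn : 0 ≤ Real.sqrt (‖p‖ ^ 2 - r ^ 2) := Real.sqrt_nonneg _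
  have hvpos : (0:ℝ) < ‖v‖ := norm_pos_iff.mpr hv
  have hexp : ‖p + t • v‖ ^ 2 = ‖p‖ ^ 2 + 2 * t * ⟪p, v⟫ + t ^ 2 * ‖v‖ ^ 2 := by
    rw [norm_add_sq_real, real_inner_smul_right, norm_smul, mul_pow]
    simp [sq_abs]
    ring
  have h2 : r ^ 2 ≤ ‖p + t • v‖ ^ 2 := by
    rw [hexp]
    rcases le_or_gt 0 ⟪p, v⟫ with hA | hA
    · nlinarith
    · have hsq : ‖v‖ ^ 2 * (‖p‖ ^ 2 - r ^ 2) > ⟪p, v⟫ ^ 2 := by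
        nlinarith
      nlinarith [sq_nonneg (t * ‖v‖ ^ 2 + ⟪p, v⟫)]
  nlinarith [norm_nonneg (p + t • v)]
end

section
/- Let p ∈ ℝ² with ‖p‖ > r > 0 and v ∈ ℝ² with v ≠ 0. If h(p,v) := ⟨p, v⟩ + ‖v‖·√(‖p‖² − r²) < 0, then there exists t > 0 such that ‖p + t v‖ < r. -/
open scoped RealInnerProductSpace

/-- If the relative velocity points strictly into the collision cone (h < 0),
then the obstacle eventually enters the open disk of radius r. -/
theorem stmt_2 (p v : EuclideanSpace ℝ (Fin 2)) (r : ℝ) (hr : 0 < r)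
    (hpr : r < ‖p‖) (hv : v ≠ 0)
    (hcone : ⟪p, v⟫ + ‖v‖ * Real.sqrt (‖p‖ ^ 2 - r ^ 2) < 0) :
    ∃ t : ℝ, 0 < t ∧ ‖p + t • v‖ < r := by
  set a : ℝ := ⟪p, v⟫ with ha
  have hvpos : (0:ℝ) < ‖v‖ := norm_pos_iff.mpr hv
  have hs : (0:ℝ) ≤ ‖p‖ ^ 2 - r ^ 2 := by nlinarith
  have hsqrt : (0:ℝ) ≤ Real.sqrt (‖p‖ ^ 2 - r ^ 2) := Real.sqrt_nonneg _
  have hsq : Real.sqrt (‖p‖ ^ 2 - r ^ 2) ^ 2 = ‖p‖ ^ 2 - r ^ 2 := Real.sq_sqrt hs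
  have haneg : a < -(‖v‖ * Real.sqrt (‖p‖ ^ 2 - r ^ 2)) := by linarith
  have hb : (0:ℝ) ≤ ‖v‖ * Real.sqrt (‖p‖ ^ 2 - r ^ 2) := mul_nonneg hvpos.le hsqrt
  have haneg' : a < 0 := by linarith
  have hf1 : (0:ℝ) < -a - ‖v‖ * Real.sqrt (‖p‖ ^ 2 - r ^ 2) := by linarith
  have hf2 : (0:ℝ) < -a + ‖v‖ * Real.sqrt (‖p‖ ^ 2 - r ^ 2) := by linarith
  have ha2 : ‖v‖ ^ 2 * (‖p‖ ^ 2 - r ^ 2) < a ^ 2 := by nlinarith [mul_pos hf1 hf2]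
  refine ⟨-a / ‖v‖ ^ 2, div_pos (by linarith) (by positivity), ?_⟩
  have hnorm : ‖p + (-a / ‖v‖ ^ 2) • v‖ ^ 2 = ‖p‖ ^ 2 - a ^ 2 / ‖v‖ ^ 2 := by
    have h1 : ‖p + (-a / ‖v‖ ^ 2) • v‖ ^ 2
        = ‖p‖ ^ 2 + 2 * ⟪p, (-a / ‖v‖ ^ 2) • v⟫ + ‖(-a / ‖v‖ ^ 2) • v‖ ^ 2 := by
      rw [← norm_add_sq_real]
    rw [h1, real_inner_smul_right, norm_smul, mul_pow, Real.norm_eq_abs, sq_abs, ← ha]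
    field_simp
    ring
  have hdiv : ‖p‖ ^ 2 - r ^ 2 < a ^ 2 / ‖v‖ ^ 2 := by
    rw [lt_div_iff₀ (by positivity)]
    nlinarith
  have hlt : ‖p + (-a / ‖v‖ ^ 2) • v‖ ^ 2 < r ^ 2 := by
    rw [hnorm]; linarith
  exact lt_of_pow_lt_pow_left₀ 2 hr.le hlt
end
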